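/- Let X, Y₁, …, Y_N be n×n matrices over a commutative ring and let m₁, …, m_N be nonnegative integers with m₁ + ⋯ + m_N ≤ n. Then Z_{n−Σᵢmᵢ, m₁,…,m_N}(X, X·Y₁, …, X·Y_N) = det(X) · Z_{m₁,…,m_N}(Y₁,…,Y_N). In particular, for N = 1 and m₁ = n this reduces to det(X·Y) = det(X)·det(Y). -/

import Mathlib

open Matrix

/-- The generalized matrix invariant `Z_{m₁,…,m_N}(X₁,…,X_N)`: the coefficient of the
monomial `α₁^{m₁} ⋯ α_N^{m_N}` in the polynomial `det(I + Σᵢ αᵢ Xᵢ)`. -/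
noncomputable def genZ {R : Type*} [CommRing R] {n N : ℕ}
    (Xs : Fin N → Matrix (Fin n) (Fin n) R) (m : Fin N → ℕ) : R :=
  MvPolynomial.coeff (Finsupp.equivFunOnFinite.symm m)
    (Matrix.det (1 + ∑ i : Fin N,
      (MvPolynomial.X i : MvPolynomial (Fin N) R) • (Xs i).map MvPolynomial.C))

/-- The substitution `α₀ ↦ t`, `αᵢ ↦ βᵢ · t`. -/
noncomputable abbrev genZaux.phi (R : Type*) [CommRing R] (N : ℕ) :
    MvPolynomial (Fin (N+1)) R →ₐ[R] Polynomial (MvPolynomial (Fin N) R) :=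
  MvPolynomial.aeval (Fin.cons Polynomial.X
    (fun i => Polynomial.C (MvPolynomial.X i) * Polynomial.X))

open genZaux in
/-- Coefficient transport along `phi`. -/
lemma genZaux.key_coeff {R : Type*} [CommRing R] {n N : ℕ} (m : Fin N → ℕ)
    (h : ∑ i : Fin N, m i ≤ n) (p : MvPolynomial (Fin (N+1)) R) :
    MvPolynomial.coeff (Finsupp.equivFunOnFinite.symm m) ((phi R N p).coeff n)
      = MvPolynomial.coeff (Finsupp.equivFunOnFinite.symm
          (Fin.cons (n - ∑ i : Fin N, m i) m)) p := by
  induction p using MvPolynomial.induction_on' with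
  | add p q hp hq => simp [map_add, Polynomial.coeff_add, MvPolynomial.coeff_add, hp, hq]
  | monomial d a =>
    rw [MvPolynomial.aeval_monomial]
    have hprod : (d.prod fun i k => (Fin.cons Polynomial.X
          (fun i => Polynomial.C (MvPolynomial.X i) * Polynomial.X) :
          Fin (N+1) → Polynomial (MvPolynomial (Fin N) R)) i ^ k)
        = Polynomial.C (∏ j : Fin N, (MvPolynomial.X j : MvPolynomial (Fin N) R) ^ d j.succ)
            * Polynomial.X ^ (∑ i : Fin (N+1), d i) := by
      rw [Finsupp.prod_fintype _ _ (fun i => pow_zero _), Fin.prod_univ_succ, Fin.sum_univ_succ]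
      simp only [Fin.cons_zero, Fin.cons_succ, mul_pow, ← Polynomial.C_pow]
      rw [Finset.prod_mul_distrib, ← map_prod, Finset.prod_pow_eq_pow_sum, pow_add]
      ring
    have halg : (algebraMap R (Polynomial (MvPolynomial (Fin N) R))) a
        = Polynomial.C (MvPolynomial.C a) := rfl
    rw [hprod, halg, ← mul_assoc, ← Polynomial.C_mul, Polynomial.coeff_C_mul,
      Polynomial.coeff_X_pow]
    have hmono : (MvPolynomial.C a * ∏ j : Fin N,
          (MvPolynomial.X j : MvPolynomial (Fin N) R) ^ d j.succ)
        = MvPolynomial.monomial (Finsupp.equivFunOnFinite.symm (fun j => d j.succ)) a := by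
      rw [MvPolynomial.monomial_eq, Finsupp.prod_fintype _ _ (fun i => pow_zero _)]
      rfl
    by_cases hT : n = ∑ i : Fin (N+1), d i
    · rw [if_pos hT, mul_one, hmono, MvPolynomial.coeff_monomial, MvPolynomial.coeff_monomial]
      have hiff : (Finsupp.equivFunOnFinite.symm (fun j => d j.succ)
            = Finsupp.equivFunOnFinite.symm m)
          ↔ (d = Finsupp.equivFunOnFinite.symm (Fin.cons (n - ∑ i : Fin N, m i) m)) := by
        rw [Equiv.apply_eq_iff_eq, Equiv.eq_symm_apply]
        constructor
        · intro ht
          have hd0 : d 0 = n - ∑ i : Fin N, m i := by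
            have h1 : ∑ i : Fin (N+1), d i = d 0 + ∑ j : Fin N, d j.succ :=
              Fin.sum_univ_succ _
            have h2 : ∑ j : Fin N, d j.succ = ∑ i : Fin N, m i :=
              Finset.sum_congr rfl (fun j _ => congrFun ht j)
            omega
          have : Finsupp.equivFunOnFinite d = (⇑d : Fin (N+1) → ℕ) := rfl
          rw [this, ← Fin.cons_self_tail (⇑d)]
          have htail : Fin.tail (⇑d) = m := funext fun j => congrFun ht j
          rw [htail, hd0]
        · intro hd
          funext j
          have : Finsupp.equivFunOnFinite d = (⇑d : Fin (N+1) → ℕ) := rfl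
          rw [this] at hd
          have := congrFun hd j.succ
          simpa using this
      rw [if_congr hiff rfl rfl]
    · rw [if_neg hT, mul_zero, MvPolynomial.coeff_zero, MvPolynomial.coeff_monomial]
      rw [if_neg]
      intro hd
      apply hT
      have : Finsupp.equivFunOnFinite d = (⇑d : Fin (N+1) → ℕ) := rfl
      rw [Equiv.eq_symm_apply, this] at hd
      rw [show (∑ i : Fin (N+1), d i) = d 0 + ∑ j : Fin N, d j.succ from Fin.sum_univ_succ _]
      have h0 : d 0 = n - ∑ i : Fin N, m i := by have := congrFun hd 0; simpa using this
      have hs : ∀ j : Fin N, d j.succ = m j := fun j => by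
        have := congrFun hd j.succ; simpa using this
      rw [h0, Finset.sum_congr rfl (fun j _ => hs j)]
      have := Nat.sub_add_cancel h
      have he : Finset.univ.sum m = ∑ i : Fin N, m i := rfl
      omega

/-- The `t^k`-coefficient of `det(1 + t A)` is `det A`. -/
lemma genZaux.coeff_det_one_add_X_smul {S : Type*} [CommRing S] {k : ℕ}
    (A : Matrix (Fin k) (Fin k) S) :
    ((1 + (Polynomial.X : Polynomial S) • A.map Polynomial.C).det).coeff k = A.det := by
  nontriviality S
  have h1 : (1 : Matrix (Fin k) (Fin k) (Polynomial S))
        + (Polynomial.X : Polynomial S) • A.map Polynomial.C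
      = 1 - (Polynomial.X : Polynomial S) • (-A).map Polynomial.C := by
    ext i j; simp
  rw [h1]
  have h2 : (1 - (Polynomial.X : Polynomial S) • (-A).map Polynomial.C).det
      = (-A).charpolyRev := rfl
  rw [h2, ← Matrix.reverse_charpoly, Polynomial.reverse, Polynomial.coeff_reflect,
    Matrix.charpoly_natDegree_eq_dim]
  simp only [Fintype.card_fin, Polynomial.revAt_le (le_refl k), Nat.sub_self]
  have h3 := Matrix.det_eq_sign_charpoly_coeff (-A)
  rw [Matrix.det_neg, Fintype.card_fin] at h3
  rcases Nat.even_or_odd k with hk | hk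
  · simpa [hk.neg_one_pow] using h3.symm
  · rw [hk.neg_one_pow] at h3
    simpa using h3.symm

open genZaux in
/-- determinant factorization. For `n x n` matrices `X, Y1, ..., YN` over a
commutative ring and `m1 + ... + mN <= n`,
`Z_{n - sum mi, m1,...,mN}(X, X*Y1, ..., X*YN) = det(X) * Z_{m1,...,mN}(Y1,...,YN)`;
in particular (`N = 1`, `m1 = n`) this reduces to `det(X*Y) = det(X) * det(Y)`. -/
theorem genZ_determinant_factorization
    {R : Type*} [CommRing R] {n N : ℕ}
    (X : Matrix (Fin n) (Fin n) R) (Ys : Fin N → Matrix (Fin n) (Fin n) R)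
    (m : Fin N → ℕ) (h : ∑ i : Fin N, m i ≤ n) :
    genZ (Fin.cons X (fun i => X * Ys i)) (Fin.cons (n - ∑ i : Fin N, m i) m)
        = X.det * genZ Ys m ∧
    ∀ (X' Y' : Matrix (Fin n) (Fin n) R), (X' * Y').det = X'.det * Y'.det := by
  refine ⟨?_, fun X' Y' => Matrix.det_mul X' Y'⟩
  unfold genZ
  rw [← key_coeff m h, AlgHom.map_det, AlgHom.mapMatrix_apply]
  have hM : ((1 + ∑ i : Fin (N+1), (MvPolynomial.X i : MvPolynomial (Fin (N+1)) R) •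
        ((Fin.cons X (fun i => X * Ys i) : Fin (N+1) → Matrix (Fin n) (Fin n) R) i).map
          MvPolynomial.C).map (phi R N))
      = 1 + (Polynomial.X : Polynomial (MvPolynomial (Fin N) R)) •
          (X.map MvPolynomial.C + ∑ k : Fin N, (MvPolynomial.X k : MvPolynomial (Fin N) R) •
            (X * Ys k).map MvPolynomial.C).map Polynomial.C := by
    ext i j
    simp only [Matrix.map_apply, Matrix.add_apply, Matrix.sum_apply, Matrix.smul_apply,
      Matrix.one_apply, smul_eq_mul, map_add, map_sum, _root_.map_mul, _root_.map_one,
      _root_.map_zero, MvPolynomial.aeval_X, MvPolynomial.aeval_C, apply_ite (phi R N),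
      Fin.sum_univ_succ, Fin.cons_zero, Fin.cons_succ, genZaux.phi,
      Polynomial.algebraMap_apply, MvPolynomial.algebraMap_eq, Finset.mul_sum]
    split_ifs <;> rw [mul_add, Finset.mul_sum] <;> ring_nf
  rw [hM, coeff_det_one_add_X_smul]
  have hA : ((X.map MvPolynomial.C : Matrix (Fin n) (Fin n) (MvPolynomial (Fin N) R))
        + ∑ k : Fin N, (MvPolynomial.X k : MvPolynomial (Fin N) R) •
        (X * Ys k).map MvPolynomial.C)
      = X.map MvPolynomial.C *
          (1 + ∑ k : Fin N, (MvPolynomial.X k : MvPolynomial (Fin N) R) •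
            (Ys k).map MvPolynomial.C) := by
    rw [mul_add, mul_one, Finset.mul_sum]
    congr 1
    refine Finset.sum_congr rfl fun k _ => ?_
    rw [Matrix.mul_smul, ← Matrix.map_mul]
  rw [hA, Matrix.det_mul, ← RingHom.mapMatrix_apply, ← RingHom.map_det, MvPolynomial.coeff_C_mul]
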